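/- On a 4 × n board (n ≥ 4), the minimum number of clues that define a Numbrix puzzle is exactly 2: there exist two clues consistent with exactly one solution, and for every single consistent clue there are at least two solutions consistent with it. -/
import Mathlib


/-- Two cells of an `m × n` board are adjacent if they agree in one coordinate
and differ by exactly 1 in the other. -/
def Adj {m n : ℕ} (a b : Fin m × Fin n) : Prop :=
  (a.1 = b.1 ∧ (a.2.val + 1 = b.2.val ∨ b.2.val + 1 = a.2.val)) ∨
  (a.2 = b.2 ∧ (a.1.val + 1 = b.1.val ∨ b.1.val + 1 = a.1.val))

/-- A Numbrix solution on an `m × n` board: a bijection onto `{1, …, m*n}`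
(equivalently, an injective map with values in `[1, m*n]`) such that cells
carrying consecutive values are adjacent. -/
def IsNumbrix {m n : ℕ} (f : Fin m × Fin n → ℕ) : Prop :=
  (∀ c, 1 ≤ f c ∧ f c ≤ m * n) ∧ Function.Injective f ∧
    ∀ c c', f c' = f c + 1 → Adj c c'

def pos (n : ℕ) (c : Fin 4 × Fin n) : ℕ :=
  if c.1.val = 0 then c.2.val
  else if c.1.val = 1 then (if c.2.val = 0 then 4*n - 1 else 2*n - 1 - c.2.val)
  else if c.1.val = 2 then (if c.2.val = 0 then 4*n - 2 else 2*n - 2 + c.2.val)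
  else 4*n - 3 - c.2.val

lemma pos_mk0 {n : ℕ} (j : ℕ) (hi : (0:ℕ) < 4) (hj : j < n) :
    pos n (⟨0, hi⟩, ⟨j, hj⟩) = j := rfl

lemma pos_mk1 {n : ℕ} (j : ℕ) (hi : (1:ℕ) < 4) (hj : j < n) :
    pos n (⟨1, hi⟩, ⟨j, hj⟩) = if j = 0 then 4*n - 1 else 2*n - 1 - j := rfl

lemma pos_mk2 {n : ℕ} (j : ℕ) (hi : (2:ℕ) < 4) (hj : j < n) :
    pos n (⟨2, hi⟩, ⟨j, hj⟩) = if j = 0 then 4*n - 2 else 2*n - 2 + j := rfl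

lemma pos_mk3 {n : ℕ} (j : ℕ) (hi : (3:ℕ) < 4) (hj : j < n) :
    pos n (⟨3, hi⟩, ⟨j, hj⟩) = 4*n - 3 - j := rfl

lemma pos_mk1z {n : ℕ} (hi : (1:ℕ) < 4) (hj : 0 < n) :
    pos n (⟨1, hi⟩, ⟨0, hj⟩) = 4*n - 1 := rfl

lemma pos_mk1p {n : ℕ} (j : ℕ) (hi : (1:ℕ) < 4) (hj : j < n) (h0 : j ≠ 0) :
    pos n (⟨1, hi⟩, ⟨j, hj⟩) = 2*n - 1 - j := by rw [pos_mk1, if_neg h0]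

lemma pos_mk2z {n : ℕ} (hi : (2:ℕ) < 4) (hj : 0 < n) :
    pos n (⟨2, hi⟩, ⟨0, hj⟩) = 4*n - 2 := rfl

lemma pos_mk2p {n : ℕ} (j : ℕ) (hi : (2:ℕ) < 4) (hj : j < n) (h0 : j ≠ 0) :
    pos n (⟨2, hi⟩, ⟨j, hj⟩) = 2*n - 2 + j := by rw [pos_mk2, if_neg h0]

lemma pos_lt {n : ℕ} (hn : 4 ≤ n) (c : Fin 4 × Fin n) : pos n c < 4 * n := by
  obtain ⟨⟨i, hi⟩, ⟨j, hj⟩⟩ := c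
  interval_cases i
  · rw [pos_mk0]; omega
  · rw [pos_mk1]; split_ifs <;> omega
  · rw [pos_mk2]; split_ifs <;> omega
  · rw [pos_mk3]; omega

lemma pos_inj {n : ℕ} (hn : 4 ≤ n) {a b : Fin 4 × Fin n} (h : pos n a = pos n b) : a = b := by
  obtain ⟨⟨i, hi⟩, ⟨j, hj⟩⟩ := a
  obtain ⟨⟨i', hi'⟩, ⟨j', hj'⟩⟩ := b
  simp only [Prod.mk.injEq, Fin.mk.injEq]
  interval_cases i <;> interval_cases i' <;>
    simp only [pos_mk0, pos_mk1, pos_mk2, pos_mk3] at h <;>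
    (try split_ifs at h) <;> omega

lemma adj_symm {m k : ℕ} {a b : Fin m × Fin k} (h : Adj a b) : Adj b a := by
  rcases h with ⟨h1, h2⟩ | ⟨h1, h2⟩
  · exact Or.inl ⟨h1.symm, h2.symm⟩
  · exact Or.inr ⟨h1.symm, h2.symm⟩

lemma pos_succ_of {n : ℕ} (hn : 4 ≤ n) {c c' : Fin 4 × Fin n}
    (h2 : pos n c' = pos n c + 1 ∨ (pos n c = 4*n - 1 ∧ pos n c' = 0)) :
    pos n c' = (pos n c + 1) % (4 * n) := by
  rcases h2 with h | ⟨h1, h2⟩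
  · have := pos_lt hn c'
    rw [Nat.mod_eq_of_lt (by omega)]
    exact h
  · rw [h1, h2, show 4*n - 1 + 1 = 4*n by omega, Nat.mod_self]

lemma exists_succ {n : ℕ} (hn : 4 ≤ n) (c : Fin 4 × Fin n) :
    ∃ c', Adj c c' ∧ pos n c' = (pos n c + 1) % (4 * n) := by
  obtain ⟨⟨i, hi⟩, ⟨j, hj⟩⟩ := c
  interval_cases i
  · by_cases h1 : j + 1 < n
    · refine ⟨(⟨0, by omega⟩, ⟨j + 1, h1⟩), Or.inl ⟨rfl, Or.inl rfl⟩, pos_succ_of hn ?_⟩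
      rw [pos_mk0, pos_mk0]; omega
    · refine ⟨(⟨1, by omega⟩, ⟨j, hj⟩), Or.inr ⟨rfl, Or.inl rfl⟩, pos_succ_of hn ?_⟩
      rw [pos_mk0, pos_mk1p _ _ _ (by omega)]; omega
  · by_cases h1 : j = 0
    · subst h1
      refine ⟨(⟨0, by omega⟩, ⟨0, by omega⟩), Or.inr ⟨rfl, Or.inr rfl⟩, pos_succ_of hn ?_⟩
      rw [pos_mk0, pos_mk1z]; omega
    · by_cases h2 : j = 1
      · subst h2
        refine ⟨(⟨2, by omega⟩, ⟨1, by omega⟩), Or.inr ⟨rfl, Or.inl rfl⟩, pos_succ_of hn ?_⟩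
        rw [pos_mk1p _ _ _ (by omega), pos_mk2p _ _ _ (by omega)]; omega
      · refine ⟨(⟨1, by omega⟩, ⟨j - 1, by omega⟩),
          Or.inl ⟨rfl, Or.inr (show (j-1) + 1 = j by omega)⟩, pos_succ_of hn ?_⟩
        rw [pos_mk1p _ _ _ (by omega), pos_mk1p _ _ _ (by omega)]; omega
  · by_cases h1 : j = 0
    · subst h1
      refine ⟨(⟨1, by omega⟩, ⟨0, by omega⟩), Or.inr ⟨rfl, Or.inr rfl⟩, pos_succ_of hn ?_⟩
      rw [pos_mk1z, pos_mk2z]; omega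
    · by_cases h2 : j + 1 < n
      · refine ⟨(⟨2, by omega⟩, ⟨j + 1, h2⟩), Or.inl ⟨rfl, Or.inl rfl⟩, pos_succ_of hn ?_⟩
        rw [pos_mk2p _ _ _ (by omega), pos_mk2p _ _ _ (by omega)]; omega
      · refine ⟨(⟨3, by omega⟩, ⟨j, hj⟩), Or.inr ⟨rfl, Or.inl rfl⟩, pos_succ_of hn ?_⟩
        rw [pos_mk2p _ _ _ (by omega), pos_mk3]; omega
  · by_cases h1 : j = 0
    · subst h1
      refine ⟨(⟨2, by omega⟩, ⟨0, by omega⟩), Or.inr ⟨rfl, Or.inr rfl⟩, pos_succ_of hn ?_⟩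
      rw [pos_mk2z, pos_mk3]; omega
    · refine ⟨(⟨3, by omega⟩, ⟨j - 1, by omega⟩),
        Or.inl ⟨rfl, Or.inr (show (j-1) + 1 = j by omega)⟩, pos_succ_of hn ?_⟩
      rw [pos_mk3, pos_mk3]; omega

/-- forward rotated solution along the cycle -/
def gsol (n k : ℕ) (c : Fin 4 × Fin n) : ℕ := (pos n c + k) % (4 * n) + 1

/-- backward rotated solution along the cycle -/
def hsol (n k : ℕ) (c : Fin 4 × Fin n) : ℕ := (k + (4 * n - pos n c)) % (4 * n) + 1

lemma gsol_isNumbrix {n : ℕ} (hn : 4 ≤ n) (k : ℕ) : IsNumbrix (gsol n k) := by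
  have hN : 0 < 4 * n := by omega
  refine ⟨fun c => ?_, ?_, ?_⟩
  · have := Nat.mod_lt (pos n c + k) hN
    constructor <;> simp only [gsol] <;> omega
  · intro a b hab
    simp only [gsol] at hab
    have h1 : (pos n a + k) % (4*n) = (pos n b + k) % (4*n) := by omega
    have h2 : pos n a % (4*n) = pos n b % (4*n) :=
      Nat.ModEq.add_right_cancel' k h1
    rw [Nat.mod_eq_of_lt (pos_lt hn a), Nat.mod_eq_of_lt (pos_lt hn b)] at h2
    exact pos_inj hn h2
  · intro c c' hcc
    obtain ⟨c'', hadj, hp⟩ := exists_succ hn c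
    simp only [gsol] at hcc
    have hlt' : (pos n c' + k) % (4*n) < 4*n := Nat.mod_lt _ hN
    have key : (pos n c'' + k) % (4*n) = (pos n c' + k) % (4*n) := by
      rw [hp, Nat.mod_add_mod]
      have h3 : (pos n c' + k) % (4*n) = (pos n c + k) % (4*n) + 1 := by omega
      have h4 : (pos n c + k) % (4*n) + 1 < 4*n := by omega
      calc (pos n c + 1 + k) % (4*n) = (pos n c + k + 1) % (4*n) := by
            rw [show pos n c + 1 + k = pos n c + k + 1 by omega]
        _ = ((pos n c + k) % (4*n) + 1) % (4*n) := by rw [Nat.mod_add_mod]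
        _ = (pos n c + k) % (4*n) + 1 := Nat.mod_eq_of_lt h4
        _ = (pos n c' + k) % (4*n) := h3.symm
    have : pos n c'' = pos n c' := by
      have hme : pos n c'' ≡ pos n c' [MOD 4*n] := Nat.ModEq.add_right_cancel' k key
      have l1 := Nat.mod_eq_of_lt (pos_lt hn c'')
      have l2 := Nat.mod_eq_of_lt (pos_lt hn c')
      rw [Nat.ModEq] at hme
      omega
    rw [pos_inj hn this] at hadj
    exact hadj

lemma hsol_isNumbrix {n : ℕ} (hn : 4 ≤ n) (k : ℕ) : IsNumbrix (hsol n k) := by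
  have hN : 0 < 4 * n := by omega
  refine ⟨fun c => ?_, ?_, ?_⟩
  · have := Nat.mod_lt (k + (4 * n - pos n c)) hN
    constructor <;> simp only [hsol] <;> omega
  · intro a b hab
    simp only [hsol] at hab
    have h1 : (k + (4*n - pos n a)) % (4*n) = (k + (4*n - pos n b)) % (4*n) := by omega
    have h2 : 4*n - pos n a ≡ 4*n - pos n b [MOD 4*n] := Nat.ModEq.add_left_cancel' k h1
    have h3 := h2.add_right (pos n a + pos n b)
    have hla := pos_lt hn a
    have hlb := pos_lt hn b
    rw [show 4*n - pos n a + (pos n a + pos n b) = 4*n + pos n b by omega,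
        show 4*n - pos n b + (pos n a + pos n b) = 4*n + pos n a by omega] at h3
    have h4 : pos n b ≡ pos n a [MOD 4*n] := Nat.ModEq.add_left_cancel' (4*n) h3
    rw [Nat.ModEq, Nat.mod_eq_of_lt hla, Nat.mod_eq_of_lt hlb] at h4
    exact pos_inj hn h4.symm
  · intro c c' hcc
    obtain ⟨c'', hadj, hp⟩ := exists_succ hn c'
    simp only [hsol] at hcc
    set N := 4 * n with hNdef
    have hla := pos_lt hn c
    have hlb := pos_lt hn c'
    have hlt' : (k + (N - pos n c')) % N < N := Nat.mod_lt _ hN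
    have h4 : (k + (N - pos n c)) % N + 1 < N := by omega
    have h5 : k + (N - pos n c') ≡ k + (N - pos n c) + 1 [MOD N] := by
      rw [Nat.ModEq]
      calc (k + (N - pos n c')) % N = (k + (N - pos n c)) % N + 1 := by omega
        _ = ((k + (N - pos n c)) % N + 1) % N := (Nat.mod_eq_of_lt h4).symm
        _ = (k + (N - pos n c) + 1) % N := by rw [Nat.mod_add_mod]
    have h6 : N - pos n c' ≡ N - pos n c + 1 [MOD N] := by
      have := Nat.ModEq.add_left_cancel' k (h5.trans (by rw [Nat.add_assoc]))
      exact this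
    have h7 := h6.add_right (pos n c + pos n c')
    rw [show N - pos n c' + (pos n c + pos n c') = N + pos n c by omega,
        show N - pos n c + 1 + (pos n c + pos n c') = N + (pos n c' + 1) by omega] at h7
    have h8 : pos n c ≡ pos n c' + 1 [MOD N] := Nat.ModEq.add_left_cancel' N h7
    have h9 : pos n c = (pos n c' + 1) % N := by
      rw [Nat.ModEq, Nat.mod_eq_of_lt hla] at h8
      exact h8
    have : c'' = c := pos_inj hn (by rw [hp, ← h9])
    rw [this] at hadj
    exact adj_symm hadj

lemma numbrix_surj {n : ℕ} {f : Fin 4 × Fin n → ℕ} (hf : IsNumbrix f) {v : ℕ}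
    (h1 : 1 ≤ v) (h2 : v ≤ 4 * n) : ∃ c, f c = v := by
  classical
  have himg : (Finset.univ.image f) ⊆ Finset.Icc 1 (4 * n) := by
    intro x hx
    simp only [Finset.mem_image] at hx
    obtain ⟨c, _, rfl⟩ := hx
    simpa [Finset.mem_Icc] using hf.1 c
  have hcard : (Finset.univ.image f).card = 4 * n := by
    rw [Finset.card_image_of_injective _ hf.2.1, Finset.card_univ]
    simp [Fintype.card_prod]
  have heq := Finset.eq_of_subset_of_card_le himg (by rw [hcard, Nat.card_Icc]; omega)
  have hv : v ∈ Finset.univ.image f := by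
    rw [heq]; simp [Finset.mem_Icc]; omega
  simp only [Finset.mem_image] at hv
  obtain ⟨c, _, hc⟩ := hv
  exact ⟨c, hc⟩

/-- taxicab distance between cells -/
def dst {m k : ℕ} (a b : Fin m × Fin k) : ℕ :=
  Nat.dist a.1.val b.1.val + Nat.dist a.2.val b.2.val

lemma dst_adj {m k : ℕ} {a b : Fin m × Fin k} (h : Adj a b) : dst a b = 1 := by
  rcases h with ⟨h1, h2⟩ | ⟨h1, h2⟩ <;>
    rw [Fin.ext_iff] at h1 <;>
    simp only [dst, Nat.dist] <;> omega

lemma numbrix_chain {n : ℕ} {f : Fin 4 × Fin n → ℕ} (hf : IsNumbrix f) :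
    ∀ k (a b : Fin 4 × Fin n), f b = f a + k → dst a b ≤ k := by
  intro k
  induction k with
  | zero =>
    intro a b h
    have : a = b := hf.2.1 (by omega)
    subst this
    simp [dst, Nat.dist_self]
  | succ k ih =>
    intro a b h
    have hb1 := (hf.1 a).1
    have hb2 := (hf.1 b).2
    obtain ⟨c, hc⟩ := numbrix_surj hf (v := f a + k) (by omega) (by omega)
    have h1 := ih a c hc
    have hadj : Adj c b := hf.2.2 c b (by omega)
    have h2 := dst_adj hadj
    have t1 := Nat.dist.triangle_inequality a.1.val c.1.val b.1.val
    have t2 := Nat.dist.triangle_inequality a.2.val c.2.val b.2.val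
    simp only [dst] at h1 h2 ⊢
    omega

lemma numbrix_metric {n : ℕ} {f : Fin 4 × Fin n → ℕ} (hf : IsNumbrix f)
    (a b : Fin 4 × Fin n) : dst a b ≤ Nat.dist (f a) (f b) := by
  rcases le_total (f a) (f b) with h | h
  · have := numbrix_chain hf (f b - f a) a b (by omega)
    simp only [Nat.dist]; omega
  · have := numbrix_chain hf (f a - f b) b a (by omega)
    have e : dst a b = dst b a := by simp [dst, Nat.dist_comm]
    simp only [Nat.dist]; omega

/-- mirrored cell -/
def mir (n : ℕ) (c : Fin 4 × Fin n) : Fin 4 × Fin n :=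
  (c.1, ⟨n - 1 - c.2.val, by have := c.2.isLt; omega⟩)

/-- the unique solution: the mirrored cycle labelling -/
def Usol (n : ℕ) (c : Fin 4 × Fin n) : ℕ := pos n (mir n c) + 1

lemma mir_mir {n : ℕ} (c : Fin 4 × Fin n) : mir n (mir n c) = c := by
  obtain ⟨⟨i, hi⟩, ⟨j, hj⟩⟩ := c
  simp only [mir, Prod.mk.injEq, Fin.mk.injEq]
  exact ⟨trivial, by omega⟩

lemma adj_mir {n : ℕ} {a b : Fin 4 × Fin n} (h : Adj (mir n a) (mir n b)) : Adj a b := by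
  obtain ⟨⟨i, hi⟩, ⟨j, hj⟩⟩ := a
  obtain ⟨⟨i', hi'⟩, ⟨j', hj'⟩⟩ := b
  simp only [mir, Adj, Fin.ext_iff] at h ⊢
  rcases h with ⟨h1, h2⟩ | ⟨h1, h2⟩
  · exact Or.inl ⟨h1, by omega⟩
  · exact Or.inr ⟨by omega, h2⟩

lemma Usol_isNumbrix {n : ℕ} (hn : 4 ≤ n) : IsNumbrix (Usol n) := by
  refine ⟨fun c => ?_, ?_, ?_⟩
  · have := pos_lt hn (mir n c)
    constructor <;> simp only [Usol] <;> omega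
  · intro a b hab
    simp only [Usol] at hab
    have : mir n a = mir n b := pos_inj hn (by omega)
    rw [← mir_mir a, ← mir_mir b, this]
  · intro c c' hcc
    simp only [Usol] at hcc
    obtain ⟨c'', hadj, hp⟩ := exists_succ hn (mir n c)
    have hlt := pos_lt hn (mir n c')
    have h9 : pos n (mir n c') = (pos n (mir n c) + 1) % (4 * n) := by
      rw [Nat.mod_eq_of_lt (by omega)]; omega
    have : c'' = mir n c' := pos_inj hn (by rw [hp, ← h9])
    rw [this] at hadj
    exact adj_mir hadj

lemma cell_ext {m k : ℕ} {a b : Fin m × Fin k}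
    (h1 : a.1.val = b.1.val) (h2 : a.2.val = b.2.val) : a = b :=
  Prod.ext (Fin.ext h1) (Fin.ext h2)

lemma f_congr {m k : ℕ} (f : Fin m × Fin k → ℕ) {i i' j j' : ℕ}
    (hi : i < m) (hi' : i' < m) (hj : j < k) (hj' : j' < k)
    (h1 : i = i') (h2 : j = j') : f (⟨i, hi⟩, ⟨j, hj⟩) = f (⟨i', hi'⟩, ⟨j', hj'⟩) := by
  subst h1; subst h2; rfl

lemma Usol_mk {n : ℕ} (i j : ℕ) (hi : i < 4) (hj : j < n) :
    Usol n (⟨i, hi⟩, ⟨j, hj⟩) = pos n (⟨i, hi⟩, ⟨n - 1 - j, by omega⟩) + 1 := rfl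

lemma forced {n : ℕ} (hn : 4 ≤ n) (f : Fin 4 × Fin n → ℕ) (hf : IsNumbrix f)
    (h00 : ∀ (hi : (0:ℕ) < 4) (hj : 0 < n), f (⟨0, hi⟩, ⟨0, hj⟩) = n)
    (h30 : ∀ (hi : (3:ℕ) < 4) (hj : 0 < n), f (⟨3, hi⟩, ⟨0, hj⟩) = 3 * n - 1) :
    f = Usol n := by
  have p0 : (0:ℕ) < 4 := by omega
  have p1 : (1:ℕ) < 4 := by omega
  have p2 : (2:ℕ) < 4 := by omega
  have p3 : (3:ℕ) < 4 := by omega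
  have q0 : 0 < n := by omega
  have hB : ∀ (i j : ℕ) (hi : i < 4) (hj : j < n),
      1 ≤ f (⟨i, hi⟩, ⟨j, hj⟩) ∧ f (⟨i, hi⟩, ⟨j, hj⟩) ≤ 4 * n := by
    intro i j hi hj
    have := hf.1 (⟨i, hi⟩, ⟨j, hj⟩)
    omega
  have M0 : ∀ (i j : ℕ) (hi : i < 4) (hj : j < n),
      i + j ≤ (f (⟨i, hi⟩, ⟨j, hj⟩) - n) + (n - f (⟨i, hi⟩, ⟨j, hj⟩)) := by
    intro i j hi hj
    have hm := numbrix_metric hf (⟨i, hi⟩, ⟨j, hj⟩) (⟨0, p0⟩, ⟨0, q0⟩)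
    have he := h00 p0 q0
    simp only [dst, Nat.dist] at hm
    omega
  have M3 : ∀ (i j : ℕ) (hi : i < 4) (hj : j < n),
      (3 - i) + j ≤ (f (⟨i, hi⟩, ⟨j, hj⟩) - (3 * n - 1)) + ((3 * n - 1) - f (⟨i, hi⟩, ⟨j, hj⟩)) := by
    intro i j hi hj
    have hm := numbrix_metric hf (⟨i, hi⟩, ⟨j, hj⟩) (⟨3, p3⟩, ⟨0, q0⟩)
    have he := h30 p3 q0
    simp only [dst, Nat.dist] at hm
    omega
  -- corner values in the last column
  have e1 : ∀ (hi : (0:ℕ) < 4) (hj : n - 1 < n), f (⟨0, hi⟩, ⟨n - 1, hj⟩) = 1 := by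
    intro hi hj
    have m0 := M0 0 (n-1) hi hj
    have m3 := M3 0 (n-1) hi hj
    have hb := hB 0 (n-1) hi hj
    omega
  have e2 : ∀ (hi : (1:ℕ) < 4) (hj : n - 1 < n), f (⟨1, hi⟩, ⟨n - 1, hj⟩) = 4 * n := by
    intro hi hj
    have m0 := M0 1 (n-1) hi hj
    have m3 := M3 1 (n-1) hi hj
    have hb := hB 1 (n-1) hi hj
    omega
  have qn : n - 1 < n := by omega
  have e3 : ∀ (hi : (2:ℕ) < 4) (hj : n - 1 < n), f (⟨2, hi⟩, ⟨n - 1, hj⟩) = 4 * n - 1 := by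
    intro hi hj
    have m0 := M0 2 (n-1) hi hj
    have m3 := M3 2 (n-1) hi hj
    have hb := hB 2 (n-1) hi hj
    by_contra hne
    have h4n : f (⟨2, hi⟩, ⟨n-1, hj⟩) = 4 * n := by omega
    have heq : ((⟨2, hi⟩ : Fin 4), (⟨n-1, hj⟩ : Fin n)) = (⟨1, p1⟩, ⟨n-1, qn⟩) :=
      hf.2.1 (by rw [h4n, e2 p1 qn])
    have := congrArg (fun p => p.1.val) heq
    simp at this
  have e4 : ∀ (hi : (3:ℕ) < 4) (hj : n - 1 < n), f (⟨3, hi⟩, ⟨n - 1, hj⟩) = 4 * n - 2 := by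
    intro hi hj
    have m0 := M0 3 (n-1) hi hj
    have m3 := M3 3 (n-1) hi hj
    have hb := hB 3 (n-1) hi hj
    by_contra hne
    rcases (by omega : f (⟨3, hi⟩, ⟨n-1, hj⟩) = 4 * n ∨ f (⟨3, hi⟩, ⟨n-1, hj⟩) = 4*n - 1) with hc | hc
    · have heq : ((⟨3, hi⟩ : Fin 4), (⟨n-1, hj⟩ : Fin n)) = (⟨1, p1⟩, ⟨n-1, qn⟩) :=
        hf.2.1 (by rw [hc, e2 p1 qn])
      have := congrArg (fun p => p.1.val) heq
      simp at this
    · have heq : ((⟨3, hi⟩ : Fin 4), (⟨n-1, hj⟩ : Fin n)) = (⟨2, p2⟩, ⟨n-1, qn⟩) :=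
        hf.2.1 (by rw [hc, e3 p2 qn])
      have := congrArg (fun p => p.1.val) heq
      simp at this
  -- row 0 : f (0, n-1-t) = t+1
  have row0 : ∀ t, t ≤ n - 1 → ∀ (hj : n - 1 - t < n), f (⟨0, p0⟩, ⟨n - 1 - t, hj⟩) = t + 1 := by
    intro t
    induction t with
    | zero =>
      intro _ hj
      have := e1 p0 qn
      have hcg := f_congr f p0 p0 hj qn (rfl) (by omega)
      omega
    | succ t ih =>
      intro ht hj
      have hq1 : n - 1 - t < n := by omega
      have prev := ih (by omega) hq1
      obtain ⟨c, hcval⟩ := numbrix_surj hf (v := t + 2) (by omega) (by omega)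
      have hadj : Adj (⟨0, p0⟩, ⟨n - 1 - t, hq1⟩) c := hf.2.2 _ c (by omega)
      obtain ⟨⟨ci, hci⟩, ⟨cj, hcj⟩⟩ := c
      simp only [Adj, Fin.mk.injEq] at hadj
      have m0 := M0 ci cj hci hcj
      have hcic : ci = 0 ∧ cj = n - 1 - (t + 1) := by omega
      have hcg := f_congr f hci p0 hcj hj hcic.1 hcic.2
      omega
  -- row 3 : f (3, n-1-t) = 4n-2-t
  have row3 : ∀ t, t ≤ n - 1 → ∀ (hj : n - 1 - t < n), f (⟨3, p3⟩, ⟨n - 1 - t, hj⟩) = 4*n - 2 - t := by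
    intro t
    induction t with
    | zero =>
      intro _ hj
      have := e4 p3 qn
      have hcg := f_congr f p3 p3 hj qn (rfl) (by omega)
      omega
    | succ t ih =>
      intro ht hj
      have hq1 : n - 1 - t < n := by omega
      have prev := ih (by omega) hq1
      obtain ⟨c, hcval⟩ := numbrix_surj hf (v := 4*n - 3 - t) (by omega) (by omega)
      have hadj : Adj c (⟨3, p3⟩, ⟨n - 1 - t, hq1⟩) := hf.2.2 c _ (by omega)
      obtain ⟨⟨ci, hci⟩, ⟨cj, hcj⟩⟩ := c
      simp only [Adj, Fin.mk.injEq] at hadj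
      have m3 := M3 ci cj hci hcj
      have hcic : ci = 3 ∧ cj = n - 1 - (t + 1) := by omega
      have hcg := f_congr f hci p3 hcj hj hcic.1 hcic.2
      omega
  -- full row values in j-form
  have val0 : ∀ (j : ℕ) (hj : j < n) (hi : (0:ℕ) < 4), f (⟨0, hi⟩, ⟨j, hj⟩) = n - j := by
    intro j hj hi
    have hq : n - 1 - (n - 1 - j) < n := by omega
    have := row0 (n - 1 - j) (by omega) hq
    have hcg := f_congr f p0 hi hq hj rfl (by omega)
    omega
  have val3 : ∀ (j : ℕ) (hj : j < n) (hi : (3:ℕ) < 4), f (⟨3, hi⟩, ⟨j, hj⟩) = 3*n - 1 + j := by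
    intro j hj hi
    have hq : n - 1 - (n - 1 - j) < n := by omega
    have := row3 (n - 1 - j) (by omega) hq
    have hcg := f_congr f p3 hi hq hj rfl (by omega)
    omega
  -- f (1,0) = n+1
  have f10 : ∀ (hi : (1:ℕ) < 4) (hj : 0 < n), f (⟨1, hi⟩, ⟨0, hj⟩) = n + 1 := by
    intro hi hj
    obtain ⟨c, hcval⟩ := numbrix_surj hf (v := n + 1) (by omega) (by omega)
    have h00' := h00 p0 q0
    have hadj : Adj (⟨0, p0⟩, ⟨0, q0⟩) c := hf.2.2 _ c (by omega)
    obtain ⟨⟨ci, hci⟩, ⟨cj, hcj⟩⟩ := c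
    simp only [Adj, Fin.mk.injEq] at hadj
    rcases hadj with ⟨hc1, hc2⟩ | ⟨hc1, hc2⟩
    · -- same row: c = (0, 1)
      have hc2' : cj = 1 := by omega
      have hv := val0 cj hcj (by omega : (0:ℕ) < 4)
      have hcg := f_congr f hci p0 hcj hcj hc1.symm rfl
      omega
    · -- same column: c = (1, 0)
      have hc22 : ci = 1 := by omega
      have hcg := f_congr f hci hi hcj hj hc22 (by omega)
      omega
  -- f (2,0) = 3n-2
  have f20 : ∀ (hi : (2:ℕ) < 4) (hj : 0 < n), f (⟨2, hi⟩, ⟨0, hj⟩) = 3*n - 2 := by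
    intro hi hj
    obtain ⟨c, hcval⟩ := numbrix_surj hf (v := 3*n - 2) (by omega) (by omega)
    have h30' := h30 p3 q0
    have hadj : Adj c (⟨3, p3⟩, ⟨0, q0⟩) := hf.2.2 c _ (by omega)
    obtain ⟨⟨ci, hci⟩, ⟨cj, hcj⟩⟩ := c
    simp only [Adj, Fin.mk.injEq] at hadj
    rcases hadj with ⟨hc1, hc2⟩ | ⟨hc1, hc2⟩
    · -- same row: c = (3, 1)
      have hc2' : cj = 1 := by omega
      have hv := val3 cj hcj (by omega : (3:ℕ) < 4)
      have hcg := f_congr f hci p3 hcj hcj hc1 rfl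
      omega
    · -- same column: c = (2, 0)
      have hc22 : ci = 2 := by omega
      have hcg := f_congr f hci hi hcj hj hc22 (by omega)
      omega
  -- rows 1 and 2, interleaved, strong induction on j
  have rows12 : ∀ (j : ℕ), j ≤ n - 2 → ∀ (hj : j < n) (hi1 : (1:ℕ) < 4) (hi2 : (2:ℕ) < 4),
      f (⟨1, hi1⟩, ⟨j, hj⟩) = n + 1 + j ∧ f (⟨2, hi2⟩, ⟨j, hj⟩) = 3*n - 2 - j := by
    intro j
    induction j using Nat.strong_induction_on with
    | _ j ih =>
      intro hjn hj hi1 hi2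
      rcases Nat.eq_zero_or_pos j with rfl | hjpos
      · exact ⟨by have := f10 hi1 hj; omega, by have := f20 hi2 hj; omega⟩
      · have hq1 : j - 1 < n := by omega
        have prev := ih (j - 1) (by omega) (by omega) hq1 p1 p2
        constructor
        · -- f (1, j) = n+1+j
          obtain ⟨c, hcval⟩ := numbrix_surj hf (v := n + 1 + j) (by omega) (by omega)
          have hadj : Adj (⟨1, p1⟩, ⟨j - 1, hq1⟩) c := hf.2.2 _ c (by omega)
          obtain ⟨⟨ci, hci⟩, ⟨cj, hcj⟩⟩ := c
          simp only [Adj, Fin.mk.injEq] at hadj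
          rcases hadj with ⟨hc1, hc2 | hc2⟩ | ⟨hc1, hc2 | hc2⟩
          · -- (1, j)
            have hcg := f_congr f hci hi1 hcj hj hc1.symm (by omega)
            omega
          · -- (1, j-2)
            have hj2 : j - 2 < n := by omega
            have prev2 := ih (j - 2) (by omega) (by omega) hj2 p1 p2
            have hcg := f_congr f hci p1 hcj hj2 hc1.symm (by omega)
            omega
          · -- (2, j-1)
            have hcg := f_congr f hci p2 hcj hq1 (by omega) hc1.symm
            omega
          · -- (0, j-1)
            have hv := val0 (j-1) hq1 p0
            have hcg := f_congr f hci p0 hcj hq1 (by omega) hc1.symm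
            omega
        · -- f (2, j) = 3n-2-j
          obtain ⟨c, hcval⟩ := numbrix_surj hf (v := 3*n - 2 - j) (by omega) (by omega)
          have hadj : Adj c (⟨2, p2⟩, ⟨j - 1, hq1⟩) := hf.2.2 c _ (by omega)
          obtain ⟨⟨ci, hci⟩, ⟨cj, hcj⟩⟩ := c
          simp only [Adj, Fin.mk.injEq] at hadj
          rcases hadj with ⟨hc1, hc2 | hc2⟩ | ⟨hc1, hc2 | hc2⟩
          · -- (2, j-2)
            have hj2 : j - 2 < n := by omega
            have prev2 := ih (j - 2) (by omega) (by omega) hj2 p1 p2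
            have hcg := f_congr f hci p2 hcj hj2 hc1 (by omega)
            omega
          · -- (2, j)
            have hcg := f_congr f hci hi2 hcj hj hc1 (by omega)
            omega
          · -- (1, j-1)
            have hcg := f_congr f hci p1 hcj hq1 (by omega) hc1
            omega
          · -- (3, j-1)
            have hv := val3 (j-1) hq1 p3
            have hcg := f_congr f hci p3 hcj hq1 (by omega) hc1
            omega
  -- conclude
  funext c
  obtain ⟨⟨i, hi⟩, ⟨j, hj⟩⟩ := c
  rw [Usol_mk]
  interval_cases i
  · rw [pos_mk0]
    have := val0 j hj hi
    omega
  · by_cases hlast : j = n - 1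
    · subst hlast
      rw [pos_mk1 (n - 1 - (n-1)) p1 (by omega)]
      have := e2 hi qn
      have hcg := f_congr f hi hi qn (by omega) rfl rfl
      split_ifs <;> omega
    · rw [pos_mk1 (n - 1 - j) p1 (by omega)]
      have := (rows12 j (by omega) hj p1 p2).1
      have hcg := f_congr f hi p1 hj hj rfl rfl
      split_ifs <;> omega
  · by_cases hlast : j = n - 1
    · subst hlast
      rw [pos_mk2 (n - 1 - (n-1)) p2 (by omega)]
      have := e3 hi qn
      have hcg := f_congr f hi hi qn (by omega) rfl rfl
      split_ifs <;> omega
    · rw [pos_mk2 (n - 1 - j) p2 (by omega)]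
      have := (rows12 j (by omega) hj p1 p2).2
      have hcg := f_congr f hi p2 hj hj rfl rfl
      split_ifs <;> omega
  · rw [pos_mk3]
    have := val3 j hj hi
    omega

theorem four_by_n_min_clues (n : ℕ) (hn : 4 ≤ n) :
    (∃ S : Finset ((Fin 4 × Fin n) × ℕ),
      S.card = 2 ∧
      ∃! f : Fin 4 × Fin n → ℕ, IsNumbrix f ∧ ∀ p ∈ S, f p.1 = p.2) ∧
    (∀ (c : Fin 4 × Fin n) (v : ℕ),
      (∃ f : Fin 4 × Fin n → ℕ, IsNumbrix f ∧ f c = v) →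
      ∃ g h : Fin 4 × Fin n → ℕ,
        IsNumbrix g ∧ IsNumbrix h ∧ g c = v ∧ h c = v ∧ g ≠ h) := by
  have q0 : 0 < n := by omega
  have p0 : (0:ℕ) < 4 := by omega
  have p3 : (3:ℕ) < 4 := by omega
  constructor
  · -- part 1 : two clues suffice
    refine ⟨{((⟨0, p0⟩, ⟨0, q0⟩), n), ((⟨3, p3⟩, ⟨0, q0⟩), 3*n - 1)}, ?_, ?_⟩
    · rw [Finset.card_insert_of_notMem, Finset.card_singleton]
      simp only [Finset.mem_singleton, Prod.mk.injEq, Fin.mk.injEq, not_and]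
      intro h
      omega
    · refine ⟨Usol n, ⟨Usol_isNumbrix hn, ?_⟩, ?_⟩
      · intro p hp
        simp only [Finset.mem_insert, Finset.mem_singleton] at hp
        rcases hp with rfl | rfl
        · rw [Usol_mk, pos_mk0]; omega
        · rw [Usol_mk, pos_mk3]; omega
      · rintro f ⟨hf, hcl⟩
        have h00 := hcl ((⟨0, p0⟩, ⟨0, q0⟩), n) (by simp)
        have h30 := hcl ((⟨3, p3⟩, ⟨0, q0⟩), 3*n - 1) (by simp)
        exact forced hn f hf (fun hi hj => h00) (fun hi hj => h30)
  · -- part 2 : one clue never suffices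
    intro c v ⟨f, hf, hfc⟩
    have hv1 : 1 ≤ v := by have := hf.1 c; omega
    have hv2 : v ≤ 4 * n := by have := hf.1 c; omega
    have hplt := pos_lt hn c
    have hN : (0:ℕ) < 4 * n := by omega
    refine ⟨gsol n (v - 1 + (4*n - pos n c)), hsol n (v - 1 + pos n c),
      gsol_isNumbrix hn _, hsol_isNumbrix hn _, ?_, ?_, ?_⟩
    · simp only [gsol]
      rw [show pos n c + (v - 1 + (4*n - pos n c)) = (v - 1) + 4*n by omega,
        Nat.add_mod_right, Nat.mod_eq_of_lt (by omega)]
      omega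
    · simp only [hsol]
      rw [show v - 1 + pos n c + (4*n - pos n c) = (v - 1) + 4*n by omega,
        Nat.add_mod_right, Nat.mod_eq_of_lt (by omega)]
      omega
    · -- g ≠ h : they differ at the successor of c
      obtain ⟨c', hadj, hp⟩ := exists_succ hn c
      intro hgh
      have := congrFun hgh c'
      simp only [gsol, hsol] at this
      by_cases hw : pos n c + 1 < 4*n
      · have hc' : pos n c' = pos n c + 1 := by rw [hp, Nat.mod_eq_of_lt hw]
        rw [hc', show pos n c + 1 + (v - 1 + (4*n - pos n c)) = v + 4*n by omega,
            Nat.add_mod_right] at this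
        by_cases hv1' : v = 1
        · rw [show v - 1 + pos n c + (4*n - (pos n c + 1)) = 4*n - 1 by omega,
              Nat.mod_eq_of_lt (by omega), Nat.mod_eq_of_lt (by omega)] at this
          omega
        · rw [show v - 1 + pos n c + (4*n - (pos n c + 1)) = (v - 2) + 4*n by omega,
              Nat.add_mod_right, Nat.mod_eq_of_lt (show v - 2 < 4*n by omega)] at this
          by_cases hvN : v = 4*n
          · rw [hvN, Nat.mod_self] at this; omega
          · rw [Nat.mod_eq_of_lt (by omega)] at this; omega
      · have hceq : pos n c = 4*n - 1 := by omega
        have hc' : pos n c' = 0 := by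
          rw [hp, hceq, show 4*n - 1 + 1 = 4*n by omega, Nat.mod_self]
        rw [hc', hceq, show 0 + (v - 1 + (4*n - (4*n - 1))) = v by omega] at this
        by_cases hv1' : v = 1
        · rw [show v - 1 + (4*n - 1) + (4*n - 0) = (4*n - 1) + 4*n by omega,
              Nat.add_mod_right, Nat.mod_eq_of_lt (by omega),
              Nat.mod_eq_of_lt (by omega)] at this
          omega
        · rw [show v - 1 + (4*n - 1) + (4*n - 0) = ((v - 2) + 4*n) + 4*n by omega,
              Nat.add_mod_right, Nat.add_mod_right,
              Nat.mod_eq_of_lt (show v - 2 < 4*n by omega)] at this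
          by_cases hvN : v = 4*n
          · rw [hvN, Nat.mod_self] at this; omega
          · rw [Nat.mod_eq_of_lt (by omega)] at this; omega
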